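/- (Proposition 4.3, sufficiency) For all reals ξ, β1, β2, β3, β4, a3 with β2*(2β4 - ξ) = 0, the element r = a3 P∧M + β1 H∧M - β2 P∧H - β3 K∧M + (1/2)(β4-ξ) D∧M - (1/2)(β4+ξ) P∧K makes the coboundary cocommutator δ_r a Lie bialgebra cocommutator on S, with δ_r(K) = ξ K∧M + β1 P∧M + β2 H∧M, δ_r(H) = β3 P∧M + (β4-ξ) H∧M, δ_r(P) = β4 P∧M, δ_r(M) = 0 (so span{K,H,P,M} is an extended Galilei Lie sub-bialgebra); moreover [[r,r]] = -(1/4)(β4+ξ)^2 K∧M∧P. -/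

import Mathlib

open TensorProduct

noncomputable section

variable (L : Type) [LieRing L] [LieAlgebra ℝ L]

/-- The wedge X∧Y = X⊗Y - Y⊗X in S⊗S. -/
def wedge (X Y : L) : L ⊗[ℝ] L := X ⊗ₜ[ℝ] Y - Y ⊗ₜ[ℝ] X

/-- The adjoint action of X on S⊗S: X·r = (ad_X⊗id + id⊗ad_X)(r). -/
def act (X : L) : (L ⊗[ℝ] L) →ₗ[ℝ] (L ⊗[ℝ] L) :=
  LinearMap.rTensor L (LieAlgebra.ad ℝ L X) + LinearMap.lTensor L (LieAlgebra.ad ℝ L X)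

/-- S∧S: the span of wedges, i.e. the skew-symmetric part of S⊗S. -/
def skewPart : Submodule ℝ (L ⊗[ℝ] L) :=
  Submodule.span ℝ {w | ∃ X Y : L, w = wedge L X Y}

/-- 1-cocycle condition. -/
def IsCocycle (δ : L → L ⊗[ℝ] L) : Prop :=
  ∀ X Y : L, δ ⁅X, Y⁆ = act L X (δ Y) - act L Y (δ X)

/-- The coboundary cocommutator δ_r(X) = X·r, as a linear map. -/
def cobdry (r : L ⊗[ℝ] L) : L →ₗ[ℝ] L ⊗[ℝ] L where
  toFun X := act L X r
  map_add' X Y := by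
    have h : LieAlgebra.ad ℝ L (X + Y) = LieAlgebra.ad ℝ L X + LieAlgebra.ad ℝ L Y :=
      map_add _ _ _
    simp only [act, h, LinearMap.rTensor_add, LinearMap.lTensor_add, LinearMap.add_apply]
    abel
  map_smul' c X := by
    have h : LieAlgebra.ad ℝ L (c • X) = c • LieAlgebra.ad ℝ L X := map_smul _ _ _
    simp only [act, h, LinearMap.rTensor_smul, LinearMap.lTensor_smul, LinearMap.add_apply,
      LinearMap.smul_apply, RingHom.id_apply, smul_add]

/-- The cyclic permutation ζ : x⊗y⊗z ↦ z⊗x⊗y on (S⊗S)⊗S. -/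
def zeta : ((L ⊗[ℝ] L) ⊗[ℝ] L) →ₗ[ℝ] ((L ⊗[ℝ] L) ⊗[ℝ] L) :=
  ((TensorProduct.assoc ℝ L L L).symm.toLinearMap).comp
    ((TensorProduct.comm ℝ (L ⊗[ℝ] L) L).toLinearMap)

/-- The co-Jacobi identity for a linear map δ : S → S⊗S. -/
def CoJacobi (δ : L →ₗ[ℝ] L ⊗[ℝ] L) : Prop :=
  ∀ X : L,
    ((LinearMap.id : ((L ⊗[ℝ] L) ⊗[ℝ] L) →ₗ[ℝ] ((L ⊗[ℝ] L) ⊗[ℝ] L)) + zeta L +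
      zeta L ∘ₗ zeta L) (LinearMap.rTensor L δ (δ X)) = 0

/-- A Lie bialgebra cocommutator: skew-symmetric-valued 1-cocycle satisfying co-Jacobi. -/
def IsBialgCocomm (δ : L →ₗ[ℝ] L ⊗[ℝ] L) : Prop :=
  (∀ X : L, δ X ∈ skewPart L) ∧ IsCocycle L ⇑δ ∧ CoJacobi L δ

/-- The general 15-parameter skew-symmetric element r(a,b,c) of S⊗S. -/
def rGen (D H P K C M : L) (a1 a2 a3 a4 a5 a6 b1 b2 b3 b4 b5 b6 c1 c2 c3 : ℝ) :
    L ⊗[ℝ] L :=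
  a1 • wedge L D P + a2 • wedge L D H + a3 • wedge L P M + a4 • wedge L H M +
    a5 • wedge L P H + a6 • wedge L P C + b1 • wedge L D K + b2 • wedge L D C +
    b3 • wedge L K M + b4 • wedge L C M + b5 • wedge L K C + b6 • wedge L K H +
    c1 • wedge L D M + c2 • wedge L P K + c3 • wedge L H C

/-- The 19 Schrödinger bialgebra equations. -/
def Eqs19 (a1 a2 a3 a4 a5 a6 b1 b2 b3 b4 b5 b6 c1 c2 c3 : ℝ) : Prop :=
  a6^2 + a6*b1 - 3*a1*b5 + b5*b6 = 0 ∧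
  a2*a3 - 2*a1*a4 - a4*b6 - 3*a5*c1 + a5*c2 = 0 ∧
  a1*a2 + a2*b6 - a5*c3 = 0 ∧
  a5*b1 - a1*b6 - 2*a2*c1 - a4*c3 = 0 ∧
  a4*a6 + a4*b1 - a2*b3 - a5*b4 + a1*c1 - a1*c2 = 0 ∧
  3*a1*b2 - a2*b5 + a6*c3 + b1*c3 = 0 ∧
  a3*b2 + 2*a1*b4 - a4*b5 + a6*c1 + a6*c2 + b3*c3 = 0 ∧
  3*a2*b5 + b2*b6 - a6*c3 = 0 ∧
  b6^2 + b6*a1 - 3*b1*a5 + a5*a6 = 0 ∧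
  b2*b3 - 2*b1*b4 - b4*a6 - 3*b5*c1 - b5*c2 = 0 ∧
  b1*b2 + b2*a6 + b5*c3 = 0 ∧
  b5*a1 - b1*a6 - 2*b2*c1 + b4*c3 = 0 ∧
  b4*b6 + b4*a1 - b2*a3 - b5*a4 + b1*c1 + b1*c2 = 0 ∧
  3*b1*a2 - b2*a5 - b6*c3 - a1*c3 = 0 ∧
  b3*a2 + 2*b1*a4 - b4*a5 + b6*c1 - b6*c2 - a3*c3 = 0 ∧
  3*b2*a5 + a2*a6 + b6*c3 = 0 ∧
  4*a2*b2 + c3^2 = 0 ∧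
  2*a4*b2 + 2*a2*b4 + a5*b5 - a6*b6 = 0 ∧
  2*a1*b1 - a1*a6 - b1*b6 + a5*b5 - a6*b6 = 0

/-- Full antisymmetrization X∧Y∧Z in (S⊗S)⊗S. -/
def wedge3 (X Y Z : L) : (L ⊗[ℝ] L) ⊗[ℝ] L :=
  (X ⊗ₜ[ℝ] Y) ⊗ₜ[ℝ] Z - (X ⊗ₜ[ℝ] Z) ⊗ₜ[ℝ] Y - (Y ⊗ₜ[ℝ] X) ⊗ₜ[ℝ] Z +
    (Y ⊗ₜ[ℝ] Z) ⊗ₜ[ℝ] X + (Z ⊗ₜ[ℝ] X) ⊗ₜ[ℝ] Y - (Z ⊗ₜ[ℝ] Y) ⊗ₜ[ℝ] X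

/-- The Schouten bracket [[r,r]], written in coordinates w.r.t. a basis. -/
def schouten (B : Module.Basis (Fin 6) ℝ L) (r : L ⊗[ℝ] L) : (L ⊗[ℝ] L) ⊗[ℝ] L :=
  ∑ i : Fin 6, ∑ j : Fin 6, ∑ k : Fin 6, ∑ l : Fin 6,
    (((B.tensorProduct B).repr r (i, j)) * ((B.tensorProduct B).repr r (k, l))) •
      ((⁅B i, B k⁆ ⊗ₜ[ℝ] B j) ⊗ₜ[ℝ] B l + (B i ⊗ₜ[ℝ] ⁅B j, B k⁆) ⊗ₜ[ℝ] B l +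
        (B i ⊗ₜ[ℝ] B k) ⊗ₜ[ℝ] ⁅B j, B l⁆)

/-- The adjoint-invariant elements of S⊗S. -/
def invariants : Submodule ℝ (L ⊗[ℝ] L) where
  carrier := {η | ∀ X : L, act L X η = 0}
  add_mem' := by
    intro a b ha hb X
    simp [map_add, ha X, hb X]
  zero_mem' := by intro X; simp
  smul_mem' := by
    intro c a ha X
    simp [map_smul, ha X]

/-- The space of skew-symmetric-valued 1-cocycles on S. -/
def cocycleSpace : Submodule ℝ (L →ₗ[ℝ] (L ⊗[ℝ] L)) where
  carrier := {δ | (∀ X : L, δ X ∈ skewPart L) ∧ IsCocycle L ⇑δ}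
  add_mem' := by
    rintro a b ⟨ha1, ha2⟩ ⟨hb1, hb2⟩
    refine ⟨fun X => add_mem (ha1 X) (hb1 X), fun X Y => ?_⟩
    simp only [LinearMap.add_apply, ha2 X Y, hb2 X Y, map_add]
    abel
  zero_mem' := by
    refine ⟨fun X => zero_mem _, fun X Y => ?_⟩
    simp
  smul_mem' := by
    rintro c a ⟨ha1, ha2⟩
    refine ⟨fun X => Submodule.smul_mem _ c (ha1 X), fun X Y => ?_⟩
    simp only [LinearMap.smul_apply, ha2 X Y, map_smul, smul_sub]

end

section auxlemmas

variable (L : Type) [LieRing L] [LieAlgebra ℝ L]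

lemma act_tmul (X a b : L) :
    act L X (a ⊗ₜ[ℝ] b) = ⁅X, a⁆ ⊗ₜ[ℝ] b + a ⊗ₜ[ℝ] ⁅X, b⁆ := by
  simp [act, LieAlgebra.ad_apply]

lemma act_wedge (X a b : L) :
    act L X (wedge L a b) = wedge L ⁅X, a⁆ b + wedge L a ⁅X, b⁆ := by
  simp only [wedge, map_sub, act_tmul]
  abel

lemma cobdry_apply (r : L ⊗[ℝ] L) (X : L) : cobdry L r X = act L X r := rfl

lemma act_lie (X Y : L) (w : L ⊗[ℝ] L) :
    act L ⁅X, Y⁆ w = act L X (act L Y w) - act L Y (act L X w) := by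
  induction w using TensorProduct.induction_on with
  | zero => simp
  | tmul a b =>
      simp only [act_tmul, map_add, tmul_sub, sub_tmul, lie_lie]
      abel
  | add x y hx hy =>
      simp only [map_add, hx, hy]
      abel

lemma act_mem_skewPart (X : L) (w : L ⊗[ℝ] L) (hw : w ∈ skewPart L) :
    act L X w ∈ skewPart L := by
  induction hw using Submodule.span_induction with
  | mem w hw =>
      obtain ⟨a, b, rfl⟩ := hw
      rw [act_wedge]
      exact add_mem (Submodule.subset_span ⟨_, _, rfl⟩) (Submodule.subset_span ⟨_, _, rfl⟩)
  | zero => simp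
  | add x y _ _ hx hy => rw [map_add]; exact add_mem hx hy
  | smul c x _ hx => rw [map_smul]; exact Submodule.smul_mem _ _ hx

lemma wedge_mem_skewPart (a b : L) : wedge L a b ∈ skewPart L :=
  Submodule.subset_span ⟨a, b, rfl⟩

lemma zeta_tmul (x y z : L) :
    zeta L ((x ⊗ₜ[ℝ] y) ⊗ₜ[ℝ] z) = (z ⊗ₜ[ℝ] x) ⊗ₜ[ℝ] y := by
  simp [zeta, TensorProduct.comm_tmul, TensorProduct.assoc_symm_tmul]

end auxlemmas
set_option maxHeartbeats 2000000 in
theorem statement16 (L : Type) [LieRing L] [LieAlgebra ℝ L]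
    (D H P K C M : L) (B : Module.Basis (Fin 6) ℝ L)
    (hB : ⇑B = ![D, H, P, K, C, M])
    (hDP : ⁅D, P⁆ = -P) (hDK : ⁅D, K⁆ = K) (hKP : ⁅K, P⁆ = M)
    (hDH : ⁅D, H⁆ = (-2 : ℝ) • H) (hDC : ⁅D, C⁆ = (2 : ℝ) • C) (hHC : ⁅H, C⁆ = D)
    (hKH : ⁅K, H⁆ = P) (hPC : ⁅P, C⁆ = -K) (hKC : ⁅K, C⁆ = 0) (hPH : ⁅P, H⁆ = 0)
    (hM : ∀ X : L, ⁅M, X⁆ = 0)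
    (xi be1 be2 be3 be4 a3 : ℝ) (hc : be2*(2*be4 - xi) = 0)
    (r : L ⊗[ℝ] L)
    (hr : r = a3 • wedge L P M + be1 • wedge L H M - be2 • wedge L P H -
      be3 • wedge L K M + ((be4 - xi)/2) • wedge L D M - ((be4 + xi)/2) • wedge L P K) :
    IsBialgCocomm L (cobdry L r) ∧
    cobdry L r K = xi • wedge L K M + be1 • wedge L P M + be2 • wedge L H M ∧
    cobdry L r H = be3 • wedge L P M + (be4 - xi) • wedge L H M ∧
    cobdry L r P = be4 • wedge L P M ∧
    cobdry L r M = 0 ∧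
    schouten L B r = (-(1/4)*(be4 + xi)^2) • wedge3 L K M P := by
  have hM' : ∀ X : L, ⁅X, M⁆ = 0 := fun X => by rw [← lie_skew, hM, neg_zero]
  have hPD : ⁅P, D⁆ = P := by rw [← lie_skew, hDP, neg_neg]
  have hKD : ⁅K, D⁆ = -K := by rw [← lie_skew, hDK]
  have hPK : ⁅P, K⁆ = -M := by rw [← lie_skew, hKP]
  have hHD : ⁅H, D⁆ = (2:ℝ) • H := by rw [← lie_skew, hDH]; module
  have hCD : ⁅C, D⁆ = (-2:ℝ) • C := by rw [← lie_skew, hDC]; module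
  have hCH : ⁅C, H⁆ = -D := by rw [← lie_skew, hHC]
  have hHK : ⁅H, K⁆ = -P := by rw [← lie_skew, hKH]
  have hCP : ⁅C, P⁆ = K := by rw [← lie_skew, hPC, neg_neg]
  have hCK : ⁅C, K⁆ = 0 := by rw [← lie_skew, hKC, neg_zero]
  have hHP : ⁅H, P⁆ = 0 := by rw [← lie_skew, hPH, neg_zero]
  have hδP : cobdry L r P = be4 • wedge L P M := by
    rw [cobdry_apply, hr]
    simp only [map_add, map_sub, map_smul, wedge, act_tmul, hDP, hDK, hKP, hDH, hDC, hHC,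
      hKH, hPC, hKC, hPH, hM, hM', hPD, hKD, hPK, hHD, hCD, hCH, hHK, hCP, hCK, hHP,
      lie_self, zero_tmul, tmul_zero, neg_tmul, tmul_neg, ← smul_tmul', tmul_smul]
    match_scalars <;>
    (first
      | ring1
      | linear_combination hc
      | linear_combination -hc
      | linear_combination (1/2) * hc
      | linear_combination (-1/2) * hc
      | linear_combination 2 * hc
      | linear_combination -2 * hc)
  have hδK : cobdry L r K = xi • wedge L K M + be1 • wedge L P M + be2 • wedge L H M := by
    rw [cobdry_apply, hr]
    simp only [map_add, map_sub, map_smul, wedge, act_tmul, hDP, hDK, hKP, hDH, hDC, hHC,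
      hKH, hPC, hKC, hPH, hM, hM', hPD, hKD, hPK, hHD, hCD, hCH, hHK, hCP, hCK, hHP,
      lie_self, zero_tmul, tmul_zero, neg_tmul, tmul_neg, ← smul_tmul', tmul_smul]
    match_scalars <;>
    (first
      | ring1
      | linear_combination hc
      | linear_combination -hc
      | linear_combination (1/2) * hc
      | linear_combination (-1/2) * hc
      | linear_combination 2 * hc
      | linear_combination -2 * hc)
  have hδH : cobdry L r H = be3 • wedge L P M + (be4 - xi) • wedge L H M := by
    rw [cobdry_apply, hr]
    simp only [map_add, map_sub, map_smul, wedge, act_tmul, hDP, hDK, hKP, hDH, hDC, hHC,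
      hKH, hPC, hKC, hPH, hM, hM', hPD, hKD, hPK, hHD, hCD, hCH, hHK, hCP, hCK, hHP,
      lie_self, zero_tmul, tmul_zero, neg_tmul, tmul_neg, ← smul_tmul', tmul_smul]
    match_scalars <;>
    (first
      | ring1
      | linear_combination hc
      | linear_combination -hc
      | linear_combination (1/2) * hc
      | linear_combination (-1/2) * hc
      | linear_combination 2 * hc
      | linear_combination -2 * hc)
  have hδM : cobdry L r M = 0 := by
    rw [cobdry_apply, hr]
    simp only [map_add, map_sub, map_smul, wedge, act_tmul, hM, hM',
      lie_self, zero_tmul, tmul_zero]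
    match_scalars <;>
    (first
      | ring1
      | linear_combination hc
      | linear_combination -hc
      | linear_combination (1/2) * hc
      | linear_combination (-1/2) * hc
      | linear_combination 2 * hc
      | linear_combination -2 * hc)
  have hδD : cobdry L r D = (-a3) • wedge L P M + (-2*be1) • wedge L H M +
      (3*be2) • wedge L P H + (-be3) • wedge L K M := by
    rw [cobdry_apply, hr]
    simp only [map_add, map_sub, map_smul, wedge, act_tmul, hDP, hDK, hKP, hDH, hDC, hHC,
      hKH, hPC, hKC, hPH, hM, hM', hPD, hKD, hPK, hHD, hCD, hCH, hHK, hCP, hCK, hHP,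
      lie_self, zero_tmul, tmul_zero, neg_tmul, tmul_neg, ← smul_tmul', tmul_smul]
    match_scalars <;>
    (first
      | ring1
      | linear_combination hc
      | linear_combination -hc
      | linear_combination (1/2) * hc
      | linear_combination (-1/2) * hc
      | linear_combination 2 * hc
      | linear_combination -2 * hc)
  have hδC : cobdry L r C = a3 • wedge L K M + (-be1) • wedge L D M +
      (-be2) • wedge L K H + be2 • wedge L P D + (-(be4 - xi)) • wedge L C M := by
    rw [cobdry_apply, hr]
    simp only [map_add, map_sub, map_smul, wedge, act_tmul, hDP, hDK, hKP, hDH, hDC, hHC,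
      hKH, hPC, hKC, hPH, hM, hM', hPD, hKD, hPK, hHD, hCD, hCH, hHK, hCP, hCK, hHP,
      lie_self, zero_tmul, tmul_zero, neg_tmul, tmul_neg, ← smul_tmul', tmul_smul]
    match_scalars <;>
    (first
      | ring1
      | linear_combination hc
      | linear_combination -hc
      | linear_combination (1/2) * hc
      | linear_combination (-1/2) * hc
      | linear_combination 2 * hc
      | linear_combination -2 * hc)
  have hB0 : B 0 = D := by rw [hB]; rfl
  have hB1 : B 1 = H := by rw [hB]; rfl
  have hB2 : B 2 = P := by rw [hB]; rfl
  have hB3 : B 3 = K := by rw [hB]; rfl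
  have hB4 : B 4 = C := by rw [hB]; rfl
  have hB5 : B 5 = M := by rw [hB]; rfl
  have hrmem : r ∈ skewPart L := by
    rw [hr]
    exact sub_mem (add_mem (sub_mem (sub_mem (add_mem
      (Submodule.smul_mem _ _ (wedge_mem_skewPart L _ _))
      (Submodule.smul_mem _ _ (wedge_mem_skewPart L _ _)))
      (Submodule.smul_mem _ _ (wedge_mem_skewPart L _ _)))
      (Submodule.smul_mem _ _ (wedge_mem_skewPart L _ _)))
      (Submodule.smul_mem _ _ (wedge_mem_skewPart L _ _)))
      (Submodule.smul_mem _ _ (wedge_mem_skewPart L _ _))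
  have hskew : ∀ X : L, cobdry L r X ∈ skewPart L := fun X =>
    act_mem_skewPart L X r hrmem
  have hcocyc : IsCocycle L ⇑(cobdry L r) := fun X Y => act_lie L X Y r
  have hcoj : CoJacobi L (cobdry L r) := by
    have hG : ((LinearMap.id + zeta L + zeta L ∘ₗ zeta L) ∘ₗ
        (LinearMap.rTensor L (cobdry L r)) ∘ₗ (cobdry L r)) = 0 := by
      apply B.ext
      intro i
      fin_cases i <;>
        simp only [Fin.isValue, Fin.zero_eta, Fin.mk_one, Fin.reduceFinMk, LinearMap.coe_comp,
          Function.comp_apply, LinearMap.add_apply, LinearMap.id_apply, LinearMap.zero_apply,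
          hB0, hB1, hB2, hB3, hB4, hB5, hδD, hδH, hδP, hδK, hδC, hδM, wedge,
          map_add, map_sub, map_smul, map_zero, LinearMap.rTensor_tmul,
          add_tmul, sub_tmul, zero_tmul, ← smul_tmul', neg_tmul, tmul_neg, tmul_smul,
          zeta_tmul, smul_zero] <;>
        match_scalars <;>
          (first
            | ring1
            | linear_combination hc
            | linear_combination -hc
            | linear_combination (1/2) * hc
            | linear_combination (-1/2) * hc
            | linear_combination (3/2) * hc
            | linear_combination (-3/2) * hc
            | linear_combination 2 * hc
            | linear_combination -2 * hc
            | linear_combination 3 * hc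
            | linear_combination -3 * hc)
    intro X
    have h := LinearMap.congr_fun hG X
    simpa using h
  refine ⟨⟨hskew, hcocyc, hcoj⟩, hδK, hδH, hδP, hδM, ?_⟩
  have hrepr : (B.tensorProduct B).repr r =
      a3 • (Finsupp.single ((2:Fin 6),(5:Fin 6)) (1:ℝ) - Finsupp.single (5,2) 1) +
      be1 • (Finsupp.single (1,5) 1 - Finsupp.single (5,1) 1) -
      be2 • (Finsupp.single (2,1) 1 - Finsupp.single (1,2) 1) -
      be3 • (Finsupp.single (3,5) 1 - Finsupp.single (5,3) 1) +
      ((be4 - xi)/2) • (Finsupp.single (0,5) 1 - Finsupp.single (5,0) 1) -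
      ((be4 + xi)/2) • (Finsupp.single (2,3) 1 - Finsupp.single (3,2) 1) := by
    rw [hr]
    simp only [wedge]
    rw [show P ⊗ₜ[ℝ] M = (B.tensorProduct B) (2,5) by rw [Module.Basis.tensorProduct_apply, hB2, hB5],
        show M ⊗ₜ[ℝ] P = (B.tensorProduct B) (5,2) by rw [Module.Basis.tensorProduct_apply, hB2, hB5],
        show H ⊗ₜ[ℝ] M = (B.tensorProduct B) (1,5) by rw [Module.Basis.tensorProduct_apply, hB1, hB5],
        show M ⊗ₜ[ℝ] H = (B.tensorProduct B) (5,1) by rw [Module.Basis.tensorProduct_apply, hB1, hB5],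
        show P ⊗ₜ[ℝ] H = (B.tensorProduct B) (2,1) by rw [Module.Basis.tensorProduct_apply, hB1, hB2],
        show H ⊗ₜ[ℝ] P = (B.tensorProduct B) (1,2) by rw [Module.Basis.tensorProduct_apply, hB1, hB2],
        show K ⊗ₜ[ℝ] M = (B.tensorProduct B) (3,5) by rw [Module.Basis.tensorProduct_apply, hB3, hB5],
        show M ⊗ₜ[ℝ] K = (B.tensorProduct B) (5,3) by rw [Module.Basis.tensorProduct_apply, hB3, hB5],
        show D ⊗ₜ[ℝ] M = (B.tensorProduct B) (0,5) by rw [Module.Basis.tensorProduct_apply, hB0, hB5],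
        show M ⊗ₜ[ℝ] D = (B.tensorProduct B) (5,0) by rw [Module.Basis.tensorProduct_apply, hB0, hB5],
        show P ⊗ₜ[ℝ] K = (B.tensorProduct B) (2,3) by rw [Module.Basis.tensorProduct_apply, hB2, hB3],
        show K ⊗ₜ[ℝ] P = (B.tensorProduct B) (3,2) by rw [Module.Basis.tensorProduct_apply, hB2, hB3]]
    simp only [map_add, map_sub, map_smul, Module.Basis.repr_self]
  have hrep00 : (B.tensorProduct B).repr r (0, 0) = 0 := by
    rw [hrepr]
    simp [Finsupp.single_apply]
  have hrep01 : (B.tensorProduct B).repr r (0, 1) = 0 := by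
    rw [hrepr]
    simp [Finsupp.single_apply]
  have hrep02 : (B.tensorProduct B).repr r (0, 2) = 0 := by
    rw [hrepr]
    simp [Finsupp.single_apply]
  have hrep03 : (B.tensorProduct B).repr r (0, 3) = 0 := by
    rw [hrepr]
    simp [Finsupp.single_apply]
  have hrep04 : (B.tensorProduct B).repr r (0, 4) = 0 := by
    rw [hrepr]
    simp [Finsupp.single_apply]
  have hrep05 : (B.tensorProduct B).repr r (0, 5) = (be4-xi)/2 := by
    rw [hrepr]
    simp [Finsupp.single_apply]
  have hrep10 : (B.tensorProduct B).repr r (1, 0) = 0 := by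
    rw [hrepr]
    simp [Finsupp.single_apply]
  have hrep11 : (B.tensorProduct B).repr r (1, 1) = 0 := by
    rw [hrepr]
    simp [Finsupp.single_apply]
  have hrep12 : (B.tensorProduct B).repr r (1, 2) = be2 := by
    rw [hrepr]
    simp [Finsupp.single_apply]
  have hrep13 : (B.tensorProduct B).repr r (1, 3) = 0 := by
    rw [hrepr]
    simp [Finsupp.single_apply]
  have hrep14 : (B.tensorProduct B).repr r (1, 4) = 0 := by
    rw [hrepr]
    simp [Finsupp.single_apply]
  have hrep15 : (B.tensorProduct B).repr r (1, 5) = be1 := by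
    rw [hrepr]
    simp [Finsupp.single_apply]
  have hrep20 : (B.tensorProduct B).repr r (2, 0) = 0 := by
    rw [hrepr]
    simp [Finsupp.single_apply]
  have hrep21 : (B.tensorProduct B).repr r (2, 1) = -be2 := by
    rw [hrepr]
    simp [Finsupp.single_apply]
  have hrep22 : (B.tensorProduct B).repr r (2, 2) = 0 := by
    rw [hrepr]
    simp [Finsupp.single_apply]
  have hrep23 : (B.tensorProduct B).repr r (2, 3) = -((be4+xi)/2) := by
    rw [hrepr]
    simp [Finsupp.single_apply]
  have hrep24 : (B.tensorProduct B).repr r (2, 4) = 0 := by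
    rw [hrepr]
    simp [Finsupp.single_apply]
  have hrep25 : (B.tensorProduct B).repr r (2, 5) = a3 := by
    rw [hrepr]
    simp [Finsupp.single_apply]
  have hrep30 : (B.tensorProduct B).repr r (3, 0) = 0 := by
    rw [hrepr]
    simp [Finsupp.single_apply]
  have hrep31 : (B.tensorProduct B).repr r (3, 1) = 0 := by
    rw [hrepr]
    simp [Finsupp.single_apply]
  have hrep32 : (B.tensorProduct B).repr r (3, 2) = (be4+xi)/2 := by
    rw [hrepr]
    simp [Finsupp.single_apply]
  have hrep33 : (B.tensorProduct B).repr r (3, 3) = 0 := by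
    rw [hrepr]
    simp [Finsupp.single_apply]
  have hrep34 : (B.tensorProduct B).repr r (3, 4) = 0 := by
    rw [hrepr]
    simp [Finsupp.single_apply]
  have hrep35 : (B.tensorProduct B).repr r (3, 5) = -be3 := by
    rw [hrepr]
    simp [Finsupp.single_apply]
  have hrep40 : (B.tensorProduct B).repr r (4, 0) = 0 := by
    rw [hrepr]
    simp [Finsupp.single_apply]
  have hrep41 : (B.tensorProduct B).repr r (4, 1) = 0 := by
    rw [hrepr]
    simp [Finsupp.single_apply]
  have hrep42 : (B.tensorProduct B).repr r (4, 2) = 0 := by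
    rw [hrepr]
    simp [Finsupp.single_apply]
  have hrep43 : (B.tensorProduct B).repr r (4, 3) = 0 := by
    rw [hrepr]
    simp [Finsupp.single_apply]
  have hrep44 : (B.tensorProduct B).repr r (4, 4) = 0 := by
    rw [hrepr]
    simp [Finsupp.single_apply]
  have hrep45 : (B.tensorProduct B).repr r (4, 5) = 0 := by
    rw [hrepr]
    simp [Finsupp.single_apply]
  have hrep50 : (B.tensorProduct B).repr r (5, 0) = -((be4-xi)/2) := by
    rw [hrepr]
    simp [Finsupp.single_apply]
  have hrep51 : (B.tensorProduct B).repr r (5, 1) = -be1 := by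
    rw [hrepr]
    simp [Finsupp.single_apply]
  have hrep52 : (B.tensorProduct B).repr r (5, 2) = -a3 := by
    rw [hrepr]
    simp [Finsupp.single_apply]
  have hrep53 : (B.tensorProduct B).repr r (5, 3) = be3 := by
    rw [hrepr]
    simp [Finsupp.single_apply]
  have hrep54 : (B.tensorProduct B).repr r (5, 4) = 0 := by
    rw [hrepr]
    simp [Finsupp.single_apply]
  have hrep55 : (B.tensorProduct B).repr r (5, 5) = 0 := by
    rw [hrepr]
    simp [Finsupp.single_apply]
  simp only [schouten, Fin.sum_univ_six, hrep00, hrep01, hrep02, hrep03, hrep04, hrep05, hrep10, hrep11, hrep12, hrep13, hrep14, hrep15, hrep20, hrep21, hrep22, hrep23, hrep24, hrep25, hrep30, hrep31, hrep32, hrep33, hrep34, hrep35, hrep40, hrep41, hrep42, hrep43, hrep44, hrep45, hrep50, hrep51, hrep52, hrep53, hrep54, hrep55]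
  simp only [mul_zero, zero_mul, zero_smul, add_zero, zero_add]
  simp only [hB0, hB1, hB2, hB3, hB4, hB5, hDP, hDK, hKP, hDH, hDC, hHC, hKH, hPC, hKC,
    hPH, hM, hM', hPD, hKD, hPK, hHD, hCD, hCH, hHK, hCP, hCK, hHP, lie_self, wedge3,
    zero_tmul, tmul_zero, neg_tmul, tmul_neg, ← smul_tmul', tmul_smul, smul_zero,
    add_zero, zero_add, smul_add, smul_sub, smul_neg]
  match_scalars <;>
    (first
      | ring1
      | linear_combination hc
      | linear_combination -hc
      | linear_combination (1/2) * hc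
      | linear_combination (-1/2) * hc
      | linear_combination 2 * hc
      | linear_combination -2 * hc)
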